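/- For every n ≥ 0, the number of {Empty, Blue, Red}-colorings of Fin n with no two adjacent indices receiving the same non-Empty color equals the number of {Empty, Blue, Red}-colorings of Fin n with no two adjacent indices receiving different non-Empty colors. Moreover, for each k, the number of such colorings with exactly k non-Empty vertices agrees between the two families. -/

import Mathlib

inductive Color : Type
  | Empty | Blue | Red
  deriving DecidableEq

instance : Fintype Color :=
  ⟨{Color.Empty, Color.Blue, Color.Red}, fun x => by cases x <;> simp⟩

/-- Col positions on `P_n`: no two adjacent indices get the same non-`Empty` color. -/
def colPathPos (n : ℕ) (c : Fin n → Color) : Prop :=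
  ∀ i j : Fin n, (j : ℕ) = (i : ℕ) + 1 →
    ¬(c i ≠ Color.Empty ∧ c i = c j)

/-- Snort positions on `P_n`: no two adjacent indices get different non-`Empty` colors. -/
def snortPathPos (n : ℕ) (c : Fin n → Color) : Prop :=
  ∀ i j : Fin n, (j : ℕ) = (i : ℕ) + 1 →
    ¬(c i ≠ Color.Empty ∧ c j ≠ Color.Empty ∧ c i ≠ c j)

instance (n : ℕ) : DecidablePred (colPathPos n) := fun _ => by
  unfold colPathPos; infer_instance

instance (n : ℕ) : DecidablePred (snortPathPos n) := fun _ => by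
  unfold snortPathPos; infer_instance


def Color.flip : Color → Color
  | Color.Empty => Color.Empty
  | Color.Blue => Color.Red
  | Color.Red => Color.Blue

lemma Color.flip_flip (x : Color) : x.flip.flip = x := by cases x <;> rfl

lemma Color.flip_ne_empty (x : Color) : x.flip ≠ Color.Empty ↔ x ≠ Color.Empty := by
  cases x <;> simp [Color.flip]

def tw (n : ℕ) (c : Fin n → Color) : Fin n → Color :=
  fun i => if (i : ℕ) % 2 = 0 then c i else (c i).flip

lemma tw_tw (n : ℕ) (c : Fin n → Color) : tw n (tw n c) = c := by
  funext i; unfold tw; split <;> simp [Color.flip_flip]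

lemma tw_ne_empty (n : ℕ) (c : Fin n → Color) (i : Fin n) :
    tw n c i ≠ Color.Empty ↔ c i ≠ Color.Empty := by
  unfold tw; split <;> simp [Color.flip_ne_empty]

lemma key (x y : Color) (hx : x ≠ Color.Empty) (hy : y ≠ Color.Empty) :
    x = y ↔ x.flip ≠ y := by cases x <;> cases y <;> simp_all [Color.flip]

lemma col_iff (n : ℕ) (c : Fin n → Color) :
    colPathPos n c ↔ snortPathPos n (tw n c) := by
  constructor <;> intro h i j hij hcond
  · apply h i j hij
    obtain ⟨h1, h2, h3⟩ := hcond
    unfold tw at h1 h2 h3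
    by_cases hi : (i : ℕ) % 2 = 0
    · have hj : ¬ ((j : ℕ) % 2 = 0) := by omega
      simp only [if_pos hi, if_neg hj] at h1 h2 h3
      cases hci : c i <;> cases hcj : c j <;> simp_all [Color.flip]
    · have hj : (j : ℕ) % 2 = 0 := by omega
      simp only [if_neg hi, if_pos hj] at h1 h2 h3
      cases hci : c i <;> cases hcj : c j <;> simp_all [Color.flip]
  · apply h i j hij
    obtain ⟨h1, h2⟩ := hcond
    unfold tw
    by_cases hi : (i : ℕ) % 2 = 0
    · have hj : ¬ ((j : ℕ) % 2 = 0) := by omega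
      simp only [if_pos hi, if_neg hj]
      cases hci : c i <;> cases hcj : c j <;> simp_all [Color.flip]
    · have hj : (j : ℕ) % 2 = 0 := by omega
      simp only [if_neg hi, if_pos hj]
      cases hci : c i <;> cases hcj : c j <;> simp_all [Color.flip]

lemma tw_card (n : ℕ) (c : Fin n → Color) :
    (Finset.univ.filter fun i => tw n c i ≠ Color.Empty).card
      = (Finset.univ.filter fun i => c i ≠ Color.Empty).card := by
  congr 1
  apply Finset.filter_congr
  intro i _
  simp [tw_ne_empty]

theorem colPath_eq_snortPath (n : ℕ) :
    Fintype.card {c : Fin n → Color // colPathPos n c} =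
      Fintype.card {c : Fin n → Color // snortPathPos n c} ∧
    ∀ k : ℕ,
      Fintype.card {c : Fin n → Color // colPathPos n c ∧
        (Finset.univ.filter fun i => c i ≠ Color.Empty).card = k} =
      Fintype.card {c : Fin n → Color // snortPathPos n c ∧
        (Finset.univ.filter fun i => c i ≠ Color.Empty).card = k} := by

  have e0 : {c : Fin n → Color // colPathPos n c} ≃ {c : Fin n → Color // snortPathPos n c} :=
    { toFun := fun c => ⟨tw n c.1, (col_iff n c.1).mp c.2⟩
      invFun := fun c => ⟨tw n c.1, by
        rw [col_iff, tw_tw]; exact c.2⟩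
      left_inv := fun c => by simp [tw_tw]
      right_inv := fun c => by simp [tw_tw] }
  refine ⟨Fintype.card_congr e0, fun k => ?_⟩
  apply Fintype.card_congr
  exact
    { toFun := fun c => ⟨tw n c.1, (col_iff n c.1).mp c.2.1, by rw [tw_card]; exact c.2.2⟩
      invFun := fun c => ⟨tw n c.1, by rw [col_iff, tw_tw]; exact c.2.1,
        by rw [tw_card]; exact c.2.2⟩
      left_inv := fun c => by simp [tw_tw]
      right_inv := fun c => by simp [tw_tw] }
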